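/- arXiv:2101.04208 — 5 statements merged into one kernel-verified Lean document; each statement's English description precedes it below -/
import Mathlib

section
/- Let n ∈ ℕ, p ∈ [1/2,1), q = 1−p, and let X be a random variable with P(X = √(q/p)) = p and P(X = −√(p/q)) = q. For all ε > 0 and γ > 0 the quantity n^{−1/2}·sup_{0<z<ε√n} ( γ·|E[X³·1_{|X|<z}]| + z·E[X²·1_{|X|≥z}] ) equals: ε, if n·ε² ≤ q/p; max{ √(q/(np)), γ·√(q³/(np)) + ε·p }, if q/p < n·ε² ≤ p/q; and max{ q, (γ·q² + p²)·1_{p>1/2}, γ·(p−q) } / √(n·p·q), if n·ε² > p/q. -/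
open MeasureTheory Real Set

/-- Truncated third moment `E[X³·1_{|X|<z}]`. -/
noncomputable def mu3 {Ω : Type*} [MeasurableSpace Ω] (μ : Measure Ω) (X : Ω → ℝ) (z : ℝ) : ℝ :=
  ∫ ω, (if |X ω| < z then (X ω) ^ 3 else 0) ∂μ

/-- Truncated second moment `E[X²·1_{|X|≥z}]`. -/
noncomputable def sig2 {Ω : Type*} [MeasurableSpace Ω] (μ : Measure Ω) (X : Ω → ℝ) (z : ℝ) : ℝ :=
  ∫ ω, (if z ≤ |X ω| then (X ω) ^ 2 else 0) ∂μ

lemma two_point_integral {Ω : Type*} [MeasurableSpace Ω] (μ : Measure Ω) [IsProbabilityMeasure μ]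
    (X : Ω → ℝ) (hX : Measurable X) (a b : ℝ) (hab : a ≠ b) (p : ℝ) (hp0 : 0 ≤ p) (hp1 : p ≤ 1)
    (hpa : μ {ω | X ω = a} = ENNReal.ofReal p) (hpb : μ {ω | X ω = b} = ENNReal.ofReal (1 - p))
    (g : ℝ → ℝ) : ∫ ω, g (X ω) ∂μ = p * g a + (1 - p) * g b := by
  set S : Set Ω := {ω | X ω = a} with hSdef
  have hS : MeasurableSet S := hX (measurableSet_singleton a)
  have hSb : MeasurableSet {ω | X ω = b} := hX (measurableSet_singleton b)
  have hcompl : μ Sᶜ = ENNReal.ofReal (1 - p) := by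
    rw [measure_compl hS (measure_ne_top μ S), hpa, measure_univ]
    rw [← ENNReal.ofReal_one, ← ENNReal.ofReal_sub 1 hp0]
  have hsub : {ω | X ω = b} ⊆ Sᶜ := by
    intro ω hω hωS
    exact hab (hωS.symm.trans hω)
  have hdiff : μ (Sᶜ \ {ω | X ω = b}) = 0 := by
    rw [measure_diff hsub hSb.nullMeasurableSet (measure_ne_top μ _), hcompl, hpb, tsub_self]
  have hae : ∀ᵐ ω ∂μ, ω ∈ Sᶜ → X ω = b := by
    apply ae_iff.mpr
    have hset : {ω | ¬(ω ∈ Sᶜ → X ω = b)} = Sᶜ \ {ω | X ω = b} := by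
      ext ω; simp [Set.mem_diff]
    rw [hset]; exact hdiff
  have hcong : (fun ω => g (X ω)) =ᵐ[μ] fun ω => if X ω = a then g a else g b := by
    filter_upwards [hae] with ω hω
    by_cases h : X ω = a
    · simp [h]
    · have hb := hω h
      rw [hb, if_neg (fun e => hab e.symm)]
  rw [integral_congr_ae hcong]
  have heq : (fun ω => if X ω = a then g a else g b)
      = fun ω => S.indicator (fun _ => g a) ω + Sᶜ.indicator (fun _ => g b) ω := by
    funext ω
    by_cases h : X ω = a
    · have : ω ∈ S := h
      simp [Set.indicator_of_mem this, Set.indicator_of_notMem (by simp [hSdef, h] : ω ∉ Sᶜ), h]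
    · have h2 : ω ∉ S := h
      simp [Set.indicator_of_notMem h2, Set.indicator_of_mem (by exact h2 : ω ∈ Sᶜ), h]
  rw [heq, integral_add ((integrable_const (g a)).indicator hS)
    ((integrable_const (g b)).indicator hS.compl),
    integral_indicator_const _ hS, integral_indicator_const _ hS.compl, measureReal_def, measureReal_def, hpa, hcompl,
    ENNReal.toReal_ofReal hp0, ENNReal.toReal_ofReal (by linarith)]
  simp [smul_eq_mul]

set_option maxHeartbeats 2000000 in
theorem esseen_fraction_gstar_two_point
    {Ω : Type*} [MeasurableSpace Ω] (μ : Measure Ω) [IsProbabilityMeasure μ]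
    (n : ℕ) (hn : 0 < n) (p : ℝ) (hp : p ∈ Set.Ico (1/2 : ℝ) 1) (q : ℝ) (hq : q = 1 - p)
    (X : Ω → ℝ) (hX : Measurable X)
    (hXp : μ {ω | X ω = Real.sqrt (q / p)} = ENNReal.ofReal p)
    (hXq : μ {ω | X ω = -Real.sqrt (p / q)} = ENNReal.ofReal q)
    (ε γ : ℝ) (hε : 0 < ε) (hγ : 0 < γ) :
    ((n : ℝ) * ε ^ 2 ≤ q / p →
      (Real.sqrt n)⁻¹ *
        sSup ((fun z => γ * |mu3 μ X z| + z * sig2 μ X z) ''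
          Set.Ioo (0 : ℝ) (ε * Real.sqrt n)) = ε) ∧
    (q / p < (n : ℝ) * ε ^ 2 → (n : ℝ) * ε ^ 2 ≤ p / q →
      (Real.sqrt n)⁻¹ *
        sSup ((fun z => γ * |mu3 μ X z| + z * sig2 μ X z) ''
          Set.Ioo (0 : ℝ) (ε * Real.sqrt n))
        = max (Real.sqrt (q / ((n : ℝ) * p)))
            (γ * Real.sqrt (q ^ 3 / ((n : ℝ) * p)) + ε * p)) ∧
    (p / q < (n : ℝ) * ε ^ 2 →
      (Real.sqrt n)⁻¹ *
        sSup ((fun z => γ * |mu3 μ X z| + z * sig2 μ X z) ''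
          Set.Ioo (0 : ℝ) (ε * Real.sqrt n))
        = max (max q (if 1/2 < p then γ * q ^ 2 + p ^ 2 else 0)) (γ * (p - q)) /
            Real.sqrt ((n : ℝ) * p * q)) := by
  obtain ⟨hphalf, hp1⟩ := hp
  have hp0 : (0:ℝ) < p := by linarith
  have hq0 : (0:ℝ) < q := by rw [hq]; linarith
  have hqp : q ≤ p := by rw [hq]; linarith
  set A : ℝ := Real.sqrt (q / p) with hAdef
  set B : ℝ := Real.sqrt (p / q) with hBdef
  have hA0 : 0 < A := Real.sqrt_pos.mpr (div_pos hq0 hp0)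
  have hB0 : 0 < B := Real.sqrt_pos.mpr (div_pos hp0 hq0)
  have hA2 : A ^ 2 = q / p := Real.sq_sqrt (div_pos hq0 hp0).le
  have hB2 : B ^ 2 = p / q := Real.sq_sqrt (div_pos hp0 hq0).le
  have hpA2 : p * A ^ 2 = q := by rw [hA2]; field_simp
  have hqB2 : q * B ^ 2 = p := by rw [hB2]; field_simp
  have hAB : A ≤ B := by
    apply Real.sqrt_le_sqrt
    rw [div_le_div_iff₀ hp0 hq0]
    nlinarith
  have hqApB : q * A ≤ p * B := mul_le_mul hqp hAB hA0.le hp0.le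
  -- the two-point integral formula
  have hint : ∀ g : ℝ → ℝ, ∫ ω, g (X ω) ∂μ = p * g A + q * g (-B) := by
    intro g
    have hAneB : A ≠ -B := by intro h; nlinarith
    have := two_point_integral μ X hX A (-B) hAneB p hp0.le hp1.le hXp
      (by rw [show (1:ℝ) - p = q by linarith]; exact hXq) g
    rw [this, show (1:ℝ) - p = q by linarith]
  have haux1 : p * A ^ 3 = q * A := by linear_combination A * hpA2
  have haux2 : q * B ^ 3 = p * B := by linear_combination B * hqB2
  have hmu3 : ∀ z : ℝ, mu3 μ X z
      = (if A < z then q * A else 0) - (if B < z then p * B else 0) := by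
    intro z
    have h := hint (fun x => if |x| < z then x ^ 3 else 0)
    simp only [mu3]
    rw [h, abs_of_pos hA0, abs_neg, abs_of_pos hB0, mul_ite, mul_ite, mul_zero, mul_zero,
      haux1, show q * (-B) ^ 3 = -(p * B) by linear_combination (-B) * hqB2]
    split_ifs <;> ring
  have hsig2 : ∀ z : ℝ, sig2 μ X z
      = (if z ≤ A then q else 0) + (if z ≤ B then p else 0) := by
    intro z
    have h := hint (fun x => if z ≤ |x| then x ^ 2 else 0)
    simp only [sig2]
    rw [h, abs_of_pos hA0, abs_neg, abs_of_pos hB0, mul_ite, mul_ite, mul_zero, mul_zero,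
      hpA2, show q * (-B) ^ 2 = p by linear_combination hqB2]
  set f : ℝ → ℝ := fun z => γ * |mu3 μ X z| + z * sig2 μ X z with hfdef
  have hf_low : ∀ z : ℝ, 0 < z → z ≤ A → f z = z := by
    intro z hz hzA
    simp only [hfdef, hmu3 z, hsig2 z]
    rw [if_neg (not_lt.mpr hzA), if_neg (not_lt.mpr (hzA.trans hAB)),
      if_pos hzA, if_pos (hzA.trans hAB)]
    rw [sub_zero, abs_zero, mul_zero, zero_add, show q + p = 1 by linarith, mul_one]
  have hf_mid : ∀ z : ℝ, A < z → z ≤ B → f z = γ * (q * A) + z * p := by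
    intro z hAz hzB
    simp only [hfdef, hmu3 z, hsig2 z]
    rw [if_pos hAz, if_neg (not_lt.mpr hzB), if_neg (not_le.mpr hAz), if_pos hzB]
    rw [sub_zero, zero_add, abs_of_nonneg (by positivity)]
  have hf_high : ∀ z : ℝ, B < z → f z = γ * (p * B - q * A) := by
    intro z hBz
    simp only [hfdef, hmu3 z, hsig2 z]
    rw [if_pos (lt_of_le_of_lt hAB hBz), if_pos hBz, if_neg (not_le.mpr (lt_of_le_of_lt hAB hBz)),
      if_neg (not_le.mpr hBz)]
    rw [abs_of_nonpos (by linarith), add_zero, mul_zero, add_zero, neg_sub]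
  set T : ℝ := ε * Real.sqrt n with hTdef
  have hn' : (0:ℝ) < n := Nat.cast_pos.mpr hn
  have hsn : 0 < Real.sqrt n := Real.sqrt_pos.mpr hn'
  have hT0 : 0 < T := mul_pos hε hsn
  have hTsq : T ^ 2 = n * ε ^ 2 := by
    rw [hTdef, mul_pow, Real.sq_sqrt hn'.le]; ring
  -- nonemptiness and boundedness of the image set
  have Sne : ((f '' Set.Ioo (0:ℝ) T)).Nonempty :=
    ⟨f (T / 2), ⟨T / 2, ⟨by positivity, by linarith⟩, rfl⟩⟩
  set C : ℝ := max A (max (γ * (q * A) + T * p) (γ * (p * B - q * A))) with hCdef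
  have hub : ∀ y ∈ f '' Set.Ioo (0:ℝ) T, y ≤ C := by
    rintro y ⟨z, ⟨hz0, hzT⟩, rfl⟩
    rcases le_or_gt z A with h | h
    · rw [hf_low z hz0 h]; exact le_max_of_le_left h
    · rcases le_or_gt z B with h2 | h2
      · rw [hf_mid z h h2]
        refine le_max_of_le_right (le_max_of_le_left ?_)
        have : z * p ≤ T * p := mul_le_mul_of_nonneg_right hzT.le hp0.le
        linarith
      · rw [hf_high z h2]
        exact le_max_of_le_right (le_max_of_le_right le_rfl)
  have Sbdd : BddAbove (f '' Set.Ioo (0:ℝ) T) := ⟨C, hub⟩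
  -- lower bound A ≤ sSup whenever A < T
  have hAle : A < T → A ≤ sSup (f '' Set.Ioo (0:ℝ) T) := by
    intro hAT
    have hsub : Set.Ioo (0:ℝ) A ⊆ f '' Set.Ioo (0:ℝ) T := by
      rintro z ⟨hz0, hzA⟩
      exact ⟨z, ⟨hz0, hzA.trans hAT⟩, hf_low z hz0 hzA.le⟩
    calc A = sSup (Set.Ioo (0:ℝ) A) := (csSup_Ioo hA0).symm
      _ ≤ _ := csSup_le_csSup Sbdd ⟨A / 2, by constructor <;> [positivity; linarith]⟩ hsub
  -- lower bound via middle interval (A, u) for A < u ≤ min T B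
  have hmidle : ∀ u : ℝ, A < u → u ≤ T → u ≤ B →
      γ * (q * A) + u * p ≤ sSup (f '' Set.Ioo (0:ℝ) T) := by
    intro u hAu huT huB
    have himg : (fun z => γ * (q * A) + z * p) '' Set.Ioo A u
        = Set.Ioo (γ * (q * A) + A * p) (γ * (q * A) + u * p) := by
      have hcomp : (fun z : ℝ => γ * (q * A) + z * p)
          = (fun y => γ * (q * A) + y) ∘ (fun z => z * p) := rfl
      rw [hcomp, Set.image_comp, Set.image_mul_right_Ioo A u hp0, Set.image_const_add_Ioo]
    have hsub : (fun z => γ * (q * A) + z * p) '' Set.Ioo A u ⊆ f '' Set.Ioo (0:ℝ) T := by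
      rintro y ⟨z, hz, rfl⟩
      exact ⟨z, ⟨hA0.trans hz.1, hz.2.trans_le huT⟩,
        hf_mid z hz.1 (hz.2.le.trans huB)⟩
    have hlt : γ * (q * A) + A * p < γ * (q * A) + u * p := by nlinarith
    calc γ * (q * A) + u * p
        = sSup (Set.Ioo (γ * (q * A) + A * p) (γ * (q * A) + u * p)) := (csSup_Ioo hlt).symm
      _ = sSup ((fun z => γ * (q * A) + z * p) '' Set.Ioo A u) := by rw [himg]
      _ ≤ _ := csSup_le_csSup Sbdd (by rw [himg]; exact Set.nonempty_Ioo.mpr hlt) hsub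
  have hApB : ¬ (1/2 < p) → A = B := by
    intro h
    have hp2 : p = 1/2 := le_antisymm (not_lt.1 h) hphalf
    have hq2 : q = 1/2 := by rw [hq, hp2]; norm_num
    rw [hAdef, hBdef, hp2, hq2]
  have hAltB : 1/2 < p → A < B := by
    intro h
    apply Real.sqrt_lt_sqrt (div_pos hq0 hp0).le
    rw [div_lt_div_iff₀ hp0 hq0]
    nlinarith
  refine ⟨?_, ?_, ?_⟩
  · -- Case 1 : T ≤ A
    intro h1
    have hTA : T ≤ A := by
      rw [← pow_le_pow_iff_left₀ hT0.le hA0.le two_ne_zero, hTsq, hA2]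
      exact h1
    have himg : f '' Set.Ioo (0:ℝ) T = Set.Ioo (0:ℝ) T := by
      rw [Set.image_congr (g := id)
        (fun z hz => hf_low z hz.1 (hz.2.le.trans hTA)), Set.image_id]
    rw [himg, csSup_Ioo hT0, hTdef, mul_comm ε, ← mul_assoc,
      inv_mul_cancel₀ hsn.ne', one_mul]
  · -- Case 2 : A < T ≤ B
    intro h2a h2b
    have hAT : A < T := by
      rw [← pow_lt_pow_iff_left₀ hA0.le hT0.le two_ne_zero, hTsq, hA2]
      exact h2a
    have hTB : T ≤ B := by
      rw [← pow_le_pow_iff_left₀ hT0.le hB0.le two_ne_zero, hTsq, hB2]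
      exact h2b
    have key : sSup (f '' Set.Ioo (0:ℝ) T) = max A (γ * (q * A) + T * p) := by
      apply le_antisymm
      · apply csSup_le Sne
        rintro y ⟨z, ⟨hz0, hzT⟩, rfl⟩
        rcases le_or_gt z A with h | h
        · rw [hf_low z hz0 h]; exact le_max_of_le_left h
        · rw [hf_mid z h (hzT.le.trans hTB)]
          refine le_max_of_le_right ?_
          have : z * p ≤ T * p := mul_le_mul_of_nonneg_right hzT.le hp0.le
          linarith
      · exact max_le (hAle hAT) (hmidle T hAT le_rfl hTB)
    rw [key, mul_max_of_nonneg _ _ (inv_nonneg.mpr hsn.le)]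
    have hqA : q * A = Real.sqrt (q ^ 3 / p) := by
      rw [hAdef, show q ^ 3 / p = q ^ 2 * (q / p) by ring,
        Real.sqrt_mul (sq_nonneg q), Real.sqrt_sq hq0.le]
    have e1 : (Real.sqrt n)⁻¹ * Real.sqrt (q / p) = Real.sqrt (q / ((n:ℝ) * p)) := by
      rw [← Real.sqrt_inv, ← Real.sqrt_mul (by positivity)]
      congr 1; field_simp
    have e2 : (Real.sqrt n)⁻¹ * Real.sqrt (q ^ 3 / p) = Real.sqrt (q ^ 3 / ((n:ℝ) * p)) := by
      rw [← Real.sqrt_inv, ← Real.sqrt_mul (by positivity)]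
      congr 1; field_simp
    have e3 : (Real.sqrt n)⁻¹ * T = ε := by
      rw [hTdef, mul_comm ε, ← mul_assoc, inv_mul_cancel₀ hsn.ne', one_mul]
    have c1 : (Real.sqrt n)⁻¹ * A = Real.sqrt (q / ((n:ℝ) * p)) := by rw [hAdef]; exact e1
    have c2 : (Real.sqrt n)⁻¹ * (γ * (q * A) + T * p)
        = γ * Real.sqrt (q ^ 3 / ((n:ℝ) * p)) + ε * p :=
      calc (Real.sqrt n)⁻¹ * (γ * (q * A) + T * p)
          = γ * ((Real.sqrt n)⁻¹ * Real.sqrt (q ^ 3 / p)) + ((Real.sqrt n)⁻¹ * T) * p := by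
            rw [hqA]; ring
        _ = γ * Real.sqrt (q ^ 3 / ((n:ℝ) * p)) + ε * p := by rw [e2, e3]
    rw [c1, c2]
  · -- Case 3 : B < T
    intro h3
    have hBT : B < T := by
      rw [← pow_lt_pow_iff_left₀ hB0.le hT0.le two_ne_zero, hTsq, hB2]
      exact h3
    have hAT : A < T := lt_of_le_of_lt hAB hBT
    have key : sSup (f '' Set.Ioo (0:ℝ) T)
        = max (max A (if 1/2 < p then γ * (q * A) + B * p else 0)) (γ * (p * B - q * A)) := by
      apply le_antisymm
      · apply csSup_le Sne
        rintro y ⟨z, ⟨hz0, hzT⟩, rfl⟩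
        rcases le_or_gt z A with h | h
        · rw [hf_low z hz0 h]
          exact le_max_of_le_left (le_max_of_le_left h)
        · rcases le_or_gt z B with h2 | h2
          · have hp' : 1/2 < p := by
              by_contra hc
              rw [hApB hc] at h
              exact absurd h2 (not_le.mpr h)
            rw [hf_mid z h h2, if_pos hp']
            refine le_max_of_le_left (le_max_of_le_right ?_)
            have : z * p ≤ B * p := mul_le_mul_of_nonneg_right h2 hp0.le
            linarith
          · rw [hf_high z h2]
            exact le_max_of_le_right le_rfl
      · refine max_le (max_le (hAle hAT) ?_) ?_
        · split_ifs with hcase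
          · exact hmidle B (hAltB hcase) hBT.le le_rfl
          · exact le_trans hA0.le (hAle hAT)
        · have hz0 : (B + T) / 2 ∈ Set.Ioo (0:ℝ) T := ⟨by positivity, by linarith⟩
          have hmem : γ * (p * B - q * A) ∈ f '' Set.Ioo (0:ℝ) T :=
            ⟨(B + T) / 2, hz0, hf_high _ (by linarith)⟩
          exact le_csSup Sbdd hmem
    rw [key]
    have hpq : (0:ℝ) < p * q := mul_pos hp0 hq0
    have hspq : 0 < Real.sqrt (p * q) := Real.sqrt_pos.mpr hpq
    have hm1 : Real.sqrt (p * q) * A = q := by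
      rw [hAdef, ← Real.sqrt_mul hpq.le, show p * q * (q / p) = q ^ 2 by field_simp,
        Real.sqrt_sq hq0.le]
    have hm2 : Real.sqrt (p * q) * B = p := by
      rw [hBdef, ← Real.sqrt_mul hpq.le, show p * q * (p / q) = p ^ 2 by field_simp,
        Real.sqrt_sq hp0.le]
    have hscale : Real.sqrt (p * q) *
        max (max A (if 1/2 < p then γ * (q * A) + B * p else 0)) (γ * (p * B - q * A))
        = max (max q (if 1/2 < p then γ * q ^ 2 + p ^ 2 else 0)) (γ * (p - q)) := by
      have hpq2 : p + q = 1 := by linarith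
      have c2 : Real.sqrt (p * q) * (if 1/2 < p then γ * (q * A) + B * p else 0)
          = (if 1/2 < p then γ * q ^ 2 + p ^ 2 else 0) := by
        rw [mul_ite, mul_zero]
        split_ifs with hcase
        · linear_combination γ * q * hm1 + p * hm2
        · rfl
      have c3 : Real.sqrt (p * q) * (γ * (p * B - q * A)) = γ * (p - q) := by
        linear_combination γ * p * hm2 - γ * q * hm1 + γ * (p - q) * hpq2
      rw [mul_max_of_nonneg _ _ hspq.le, mul_max_of_nonneg _ _ hspq.le, hm1, c2, c3]
    have hsplit : Real.sqrt ((n:ℝ) * p * q) = Real.sqrt n * Real.sqrt (p * q) := by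
      rw [show (n:ℝ) * p * q = n * (p * q) by ring, Real.sqrt_mul hn'.le]
    rw [← hscale, hsplit, mul_comm (Real.sqrt (p * q)), mul_div_mul_right _ _ hspq.ne',
      inv_mul_eq_div]
end

section
/- Let n ∈ ℕ, p ∈ [1/2,1), q = 1−p, and let X be a random variable with P(X = √(q/p)) = p and P(X = −√(p/q)) = q. For all ε > 0 and γ > 0 the quantity sup_{0<z<ε√n} ( (γ/z)·|E[X³·1_{|X|<z}]| + E[X²·1_{|X|≥z}] ) equals: 1, if n·ε² ≤ q/p; max{1, γ·q + p}, if q/p < n·ε² ≤ p/q; and max{ 1, (γ·q + p)·1_{p>1/2}, γ·(p−q)/p }, if n·ε² > p/q. -/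
open MeasureTheory Real Set
open Filter

lemma integral_two_point' {Ω : Type*} [MeasurableSpace Ω] (μ : Measure Ω) [IsProbabilityMeasure μ]
    (X : Ω → ℝ) (hX : Measurable X) (a b p q : ℝ) (hab : a ≠ b)
    (hp : 0 ≤ p) (hq : 0 ≤ q) (hpq : p + q = 1)
    (hA : μ {ω | X ω = a} = ENNReal.ofReal p) (hB : μ {ω | X ω = b} = ENNReal.ofReal q)
    (h : ℝ → ℝ) : ∫ ω, h (X ω) ∂μ = p * h a + q * h b := by
  set A : Set Ω := {ω | X ω = a} with hAdef
  set B : Set Ω := {ω | X ω = b} with hBdef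
  have mA : MeasurableSet A := hX (measurableSet_singleton a)
  have mB : MeasurableSet B := hX (measurableSet_singleton b)
  have hdisj : Disjoint A B := by
    rw [Set.disjoint_left]
    intro ω hωA hωB
    exact hab ((hωA : X ω = a).symm.trans (hωB : X ω = b))
  have hAB : μ (A ∪ B) = 1 := by
    rw [measure_union hdisj mB, hA, hB, ← ENNReal.ofReal_add hp hq, hpq, ENNReal.ofReal_one]
  have hcompl : μ (A ∪ B)ᶜ = 0 := by
    rw [measure_compl (mA.union mB) (measure_ne_top μ _), measure_univ, hAB, tsub_self]
  have hmem : ∀ᵐ ω ∂μ, ω ∈ A ∪ B := by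
    rw [Filter.eventually_iff]
    exact mem_ae_iff.mpr hcompl
  have hae : (fun ω => h (X ω)) =ᵐ[μ]
      (fun ω => A.indicator (fun _ => h a) ω + B.indicator (fun _ => h b) ω) := by
    filter_upwards [hmem] with ω hω
    rcases hω with hωA | hωB
    · have hx : X ω = a := hωA
      have hnB : ω ∉ B := fun hωB => hab (hx.symm.trans (hωB : X ω = b))
      rw [Set.indicator_of_mem hωA, Set.indicator_of_notMem hnB, add_zero, hx]
    · have hx : X ω = b := hωB
      have hnA : ω ∉ A := fun hωA => hab ((hωA : X ω = a).symm.trans hx)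
      rw [Set.indicator_of_mem hωB, Set.indicator_of_notMem hnA, zero_add, hx]
  rw [integral_congr_ae hae,
    integral_add ((integrable_const (h a)).indicator mA) ((integrable_const (h b)).indicator mB),
    integral_indicator_const _ mA, integral_indicator_const _ mB, measureReal_def, measureReal_def, hA, hB,
    ENNReal.toReal_ofReal hp, ENNReal.toReal_ofReal hq, smul_eq_mul, smul_eq_mul]

lemma le_of_sq_le_sq' {x y : ℝ} (hx : 0 ≤ x) (hy : 0 ≤ y) (h : x ^ 2 ≤ y ^ 2) : x ≤ y := by
  nlinarith

lemma lt_of_sq_lt_sq' {x y : ℝ} (hy : 0 ≤ y) (h : x ^ 2 < y ^ 2) : x < y := by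
  nlinarith

lemma le_csSup_approach (S : Set ℝ) (hbd : BddAbove S) (c e s t : ℝ) (hs : 0 < s) (hst : s < t)
    (hmem : ∀ z ∈ Set.Ioo s t, c / z + e ∈ S) : c / s + e ≤ sSup S := by
  set u : ℕ → ℝ := fun k => s + (t - s) / ((k : ℝ) + 2) with hu
  have hts : 0 < t - s := sub_pos.mpr hst
  have huIoo : ∀ k, u k ∈ Set.Ioo s t := by
    intro k
    have h2 : (0:ℝ) < (k:ℝ) + 2 := by positivity
    constructor
    · have : 0 < (t - s) / ((k:ℝ) + 2) := div_pos hts h2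
      simp only [hu]; linarith
    · have : (t - s) / ((k:ℝ) + 2) < t - s :=
        div_lt_self hts (by have := Nat.cast_nonneg (α := ℝ) k; linarith)
      simp only [hu]; linarith
  have h1 : Tendsto (fun k : ℕ => ((k : ℝ) + 2)) atTop atTop :=
    tendsto_atTop_add_const_right _ 2 tendsto_natCast_atTop_atTop
  have h2 : Tendsto (fun k : ℕ => (t - s) / ((k:ℝ) + 2)) atTop (nhds 0) :=
    Filter.Tendsto.div_atTop tendsto_const_nhds h1
  have hz : Tendsto u atTop (nhds s) := by
    have := (tendsto_const_nhds : Tendsto (fun _ : ℕ => s) atTop (nhds s)).add h2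
    simpa using this
  have hlim : Tendsto (fun k => c / u k + e) atTop (nhds (c / s + e)) :=
    (Filter.Tendsto.div tendsto_const_nhds hz hs.ne').add tendsto_const_nhds
  exact le_of_tendsto hlim (Filter.Eventually.of_forall fun k => le_csSup hbd (hmem _ (huIoo k)))

theorem esseen_fraction_gconst_two_point
    {Ω : Type*} [MeasurableSpace Ω] (μ : Measure Ω) [IsProbabilityMeasure μ]
    (n : ℕ) (hn : 0 < n) (p : ℝ) (hp : p ∈ Set.Ico (1/2 : ℝ) 1) (q : ℝ) (hq : q = 1 - p)
    (X : Ω → ℝ) (hX : Measurable X)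
    (hXp : μ {ω | X ω = Real.sqrt (q / p)} = ENNReal.ofReal p)
    (hXq : μ {ω | X ω = -Real.sqrt (p / q)} = ENNReal.ofReal q)
    (ε γ : ℝ) (hε : 0 < ε) (hγ : 0 < γ) :
    ((n : ℝ) * ε ^ 2 ≤ q / p →
      sSup ((fun z => γ / z * |mu3 μ X z| + sig2 μ X z) ''
        Set.Ioo (0 : ℝ) (ε * Real.sqrt n)) = 1) ∧
    (q / p < (n : ℝ) * ε ^ 2 → (n : ℝ) * ε ^ 2 ≤ p / q →
      sSup ((fun z => γ / z * |mu3 μ X z| + sig2 μ X z) ''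
        Set.Ioo (0 : ℝ) (ε * Real.sqrt n)) = max 1 (γ * q + p)) ∧
    (p / q < (n : ℝ) * ε ^ 2 →
      sSup ((fun z => γ / z * |mu3 μ X z| + sig2 μ X z) ''
        Set.Ioo (0 : ℝ) (ε * Real.sqrt n))
        = max (max 1 (if 1/2 < p then γ * q + p else 0)) (γ * (p - q) / p)) := by
  obtain ⟨hp1, hp2⟩ := hp
  have hp0 : 0 < p := by linarith
  have hq0 : 0 < q := by rw [hq]; linarith
  have hpq : p + q = 1 := by rw [hq]; ring
  have hqp : q ≤ p := by rw [hq]; linarith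
  set a := Real.sqrt (q / p) with hadef
  set b' := Real.sqrt (p / q) with hbdef
  have ha0 : 0 < a := Real.sqrt_pos.mpr (by positivity)
  have hb0 : 0 < b' := Real.sqrt_pos.mpr (by positivity)
  have ha2 : a ^ 2 = q / p := Real.sq_sqrt (by positivity)
  have hb2 : b' ^ 2 = p / q := Real.sq_sqrt (by positivity)
  have hpa2 : p * a ^ 2 = q := by rw [ha2]; field_simp
  have hqb2 : q * b' ^ 2 = p := by rw [hb2]; field_simp
  have hpa : p * a = q * b' := by
    have h1 : (p * a) ^ 2 = (q * b') ^ 2 := by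
      rw [mul_pow, mul_pow, ha2, hb2]; field_simp
    nlinarith [mul_pos hp0 ha0, mul_pos hq0 hb0]
  have hab : a ≤ b' := by
    refine le_of_sq_le_sq' ha0.le hb0.le ?_
    rw [ha2, hb2, div_le_div_iff₀ hp0 hq0]
    exact mul_le_mul hqp hqp hq0.le hp0.le
  have hqapb : q * a ≤ p * b' := by nlinarith [mul_pos hq0 hb0]
  have hInt : ∀ h : ℝ → ℝ, ∫ ω, h (X ω) ∂μ = p * h a + q * h (-b') := fun h =>
    integral_two_point' μ X hX a (-b') p q (ne_of_gt (by linarith)) hp0.le hq0.le hpq hXp hXq h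
  have hpa3 : p * a ^ 3 = q * a := by linear_combination a * hpa2
  have hqb3 : q * b' ^ 3 = p * b' := by linear_combination b' * hqb2
  have hmu : ∀ z : ℝ, mu3 μ X z =
      (if a < z then q * a else 0) + (if b' < z then -(p * b') else 0) := by
    intro z
    have h1 : mu3 μ X z = p * (if |a| < z then a ^ 3 else 0)
        + q * (if |(-b')| < z then (-b') ^ 3 else 0) :=
      hInt (fun t => if |t| < z then t ^ 3 else 0)
    rw [h1, abs_of_pos ha0, abs_neg, abs_of_pos hb0]
    split_ifs
    · linear_combination hpa3 - hqb3
    · linear_combination hpa3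
    · linear_combination - hqb3
    · ring
  have hsig : ∀ z : ℝ, sig2 μ X z =
      (if z ≤ a then q else 0) + (if z ≤ b' then p else 0) := by
    intro z
    have h1 : sig2 μ X z = p * (if z ≤ |a| then a ^ 2 else 0)
        + q * (if z ≤ |(-b')| then (-b') ^ 2 else 0) :=
      hInt (fun t => if z ≤ |t| then t ^ 2 else 0)
    rw [h1, abs_of_pos ha0, abs_neg, abs_of_pos hb0]
    split_ifs
    · linear_combination hpa2 + hqb2
    · linear_combination hpa2
    · linear_combination hqb2
    · ring
  set T := ε * Real.sqrt n with hTdef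
  have hT0 : 0 < T := mul_pos hε (Real.sqrt_pos.mpr (by exact_mod_cast hn))
  have hT2 : T ^ 2 = (n : ℝ) * ε ^ 2 := by
    rw [hTdef, mul_pow, Real.sq_sqrt (Nat.cast_nonneg n)]; ring
  set F := fun z => γ / z * |mu3 μ X z| + sig2 μ X z with hFdef
  set S := F '' Set.Ioo (0 : ℝ) T with hSdef
  have hF1 : ∀ z : ℝ, 0 < z → z ≤ a → F z = 1 := by
    intro z hz0 hza
    simp only [hFdef, hmu z, hsig z, if_neg (not_lt.mpr hza),
      if_neg (not_lt.mpr (hza.trans hab)), if_pos hza, if_pos (hza.trans hab)]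
    simp only [add_zero, abs_zero, mul_zero, zero_add]
    linarith
  have hF2 : ∀ z : ℝ, a < z → z ≤ b' → F z = γ * (q * a) / z + p := by
    intro z h1 h2
    simp only [hFdef, hmu z, hsig z, if_pos h1, if_neg (not_lt.mpr h2),
      if_neg (not_le.mpr h1), if_pos h2]
    rw [add_zero, zero_add, abs_of_nonneg (by positivity : (0:ℝ) ≤ q * a)]
    ring
  have hF3 : ∀ z : ℝ, b' < z → F z = γ * (p * b' - q * a) / z := by
    intro z h1
    have haz : a < z := lt_of_le_of_lt hab h1
    simp only [hFdef, hmu z, hsig z, if_pos haz, if_pos h1,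
      if_neg (not_le.mpr haz), if_neg (not_le.mpr h1)]
    rw [abs_of_nonpos (by linarith : q * a + -(p * b') ≤ 0)]
    ring
  refine ⟨?_, ?_, ?_⟩
  · -- Case 1 : T ≤ a
    intro hcase
    have hTa : T ≤ a := le_of_sq_le_sq' hT0.le ha0.le (by rw [hT2, ha2]; exact hcase)
    have hne : S.Nonempty :=
      ⟨F (T / 2), Set.mem_image_of_mem F ⟨half_pos hT0, half_lt_self hT0⟩⟩
    have hub : ∀ x ∈ S, x ≤ 1 := by
      rintro x ⟨z, ⟨hz0, hzT⟩, rfl⟩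
      exact le_of_eq (hF1 z hz0 (hzT.le.trans hTa))
    refine le_antisymm (csSup_le hne hub) ?_
    have h1 : (1:ℝ) ∈ S :=
      ⟨T / 2, ⟨half_pos hT0, half_lt_self hT0⟩, hF1 _ (half_pos hT0) ((half_lt_self hT0).le.trans hTa)⟩
    exact le_csSup ⟨1, hub⟩ h1
  · -- Case 2 : a < T ≤ b'
    intro hcase1 hcase2
    have haT : a < T := lt_of_sq_lt_sq' hT0.le (by rw [ha2, hT2]; exact hcase1)
    have hTb : T ≤ b' := le_of_sq_le_sq' hT0.le hb0.le (by rw [hT2, hb2]; exact hcase2)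
    have hub : ∀ x ∈ S, x ≤ max 1 (γ * q + p) := by
      rintro x ⟨z, ⟨hz0, hzT⟩, rfl⟩
      rcases le_or_gt z a with hza | hza
      · exact (hF1 z hz0 hza).le.trans (le_max_left _ _)
      · rw [hF2 z hza (hzT.le.trans hTb)]
        refine le_trans ?_ (le_max_right _ _)
        have hdiv : γ * (q * a) / z ≤ γ * (q * a) / a := by
          gcongr
          all_goals first | positivity | exact hza.le
        have : γ * (q * a) / a = γ * q := by rw [mul_div_assoc, mul_div_cancel_right₀ _ ha0.ne']
        linarith [hdiv, this.symm.le]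
    have hbd : BddAbove S := ⟨_, hub⟩
    refine le_antisymm (csSup_le ⟨F a, Set.mem_image_of_mem F ⟨ha0, haT⟩⟩ hub) (max_le ?_ ?_)
    · exact le_csSup hbd ⟨a, ⟨ha0, haT⟩, hF1 a ha0 le_rfl⟩
    · have happ := le_csSup_approach S hbd (γ * (q * a)) p a T ha0 haT ?_
      · have : γ * (q * a) / a = γ * q := by rw [mul_div_assoc, mul_div_cancel_right₀ _ ha0.ne']
        linarith [happ]
      · rintro z ⟨hz1, hz2⟩
        exact ⟨z, ⟨ha0.trans hz1, hz2⟩, hF2 z hz1 (hz2.le.trans hTb)⟩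
  · -- Case 3 : b' < T
    intro hcase
    have hbT : b' < T := lt_of_sq_lt_sq' hT0.le (by rw [hb2, hT2]; exact hcase)
    have haT : a < T := lt_of_le_of_lt hab hbT
    have hd : p * (p * b' - q * a) = (p - q) * b' := by
      linear_combination (-q) * hpa + (p - q) * b' * hpq
    have hgd : γ * (p * b' - q * a) / b' = γ * (p - q) / p := by
      rw [div_eq_div_iff hb0.ne' hp0.ne']
      linear_combination γ * hd
    set M := max (max 1 (if 1/2 < p then γ * q + p else 0)) (γ * (p - q) / p) with hM
    have hub : ∀ x ∈ S, x ≤ M := by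
      rintro x ⟨z, ⟨hz0, hzT⟩, rfl⟩
      rcases le_or_gt z a with hza | hza
      · exact (hF1 z hz0 hza).le.trans ((le_max_left _ _).trans (le_max_left _ _))
      · rcases le_or_gt z b' with hzb | hzb
        · have hpgt : 1/2 < p := by
            by_contra hh
            have : p = 1/2 := le_antisymm (not_lt.mp hh) hp1
            have : a = b' := by rw [hadef, hbdef, hq, this]; norm_num
            linarith [hza.trans_le hzb, this]
          rw [hF2 z hza hzb]
          have hdiv : γ * (q * a) / z ≤ γ * (q * a) / a := by
            gcongr
            all_goals first | positivity | exact hza.le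
          have heq : γ * (q * a) / a = γ * q := by rw [mul_div_assoc, mul_div_cancel_right₀ _ ha0.ne']
          have : γ * (q * a) / z + p ≤ γ * q + p := by linarith
          calc γ * (q * a) / z + p ≤ γ * q + p := this
            _ = if 1/2 < p then γ * q + p else 0 := by rw [if_pos hpgt]
            _ ≤ M := (le_max_right _ _).trans (le_max_left _ _)
        · rw [hF3 z hzb]
          have hdiv : γ * (p * b' - q * a) / z ≤ γ * (p * b' - q * a) / b' := by
            gcongr
            all_goals first | exact mul_nonneg hγ.le (by linarith) | exact hzb.le
          calc γ * (p * b' - q * a) / z ≤ γ * (p * b' - q * a) / b' := hdiv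
            _ = γ * (p - q) / p := hgd
            _ ≤ M := le_max_right _ _
    have hbd : BddAbove S := ⟨_, hub⟩
    refine le_antisymm (csSup_le ⟨F a, Set.mem_image_of_mem F ⟨ha0, haT⟩⟩ hub)
      (max_le (max_le ?_ ?_) ?_)
    · exact le_csSup hbd ⟨a, ⟨ha0, haT⟩, hF1 a ha0 le_rfl⟩
    · split_ifs with hpgt
      · have hqltp : q < p := by rw [hq]; linarith
        have haltb : a < b' := by
          refine lt_of_sq_lt_sq' hb0.le ?_
          rw [ha2, hb2, div_lt_div_iff₀ hp0 hq0]
          exact mul_lt_mul'' hqltp hqltp hq0.le hq0.le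
        have happ := le_csSup_approach S hbd (γ * (q * a)) p a b' ha0 haltb ?_
        · have : γ * (q * a) / a = γ * q := by rw [mul_div_assoc, mul_div_cancel_right₀ _ ha0.ne']
          linarith [happ]
        · rintro z ⟨hz1, hz2⟩
          exact ⟨z, ⟨ha0.trans hz1, hz2.trans hbT⟩, hF2 z hz1 hz2.le⟩
      · have : (1:ℝ) ≤ sSup S := le_csSup hbd ⟨a, ⟨ha0, haT⟩, hF1 a ha0 le_rfl⟩
        linarith
    · have happ := le_csSup_approach S hbd (γ * (p * b' - q * a)) 0 b' T hb0 hbT ?_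
      · rw [add_zero] at happ
        linarith [hgd ▸ happ]
      · rintro z ⟨hz1, hz2⟩
        rw [add_zero]
        exact ⟨z, ⟨hb0.trans hz1, hz2⟩, hF3 z hz1⟩
end

section
/- Let n ∈ ℕ, p ∈ [1/2,1), q = 1−p, and let X be a random variable with P(X = √(q/p)) = p and P(X = −√(p/q)) = q. For all ε > 0 and γ > 0 the quantity n^{−1/2}·( γ·|E[X³·1_{|X|<ε√n}]| + sup_{0<z<ε√n} z·E[X²·1_{|X|≥z}] ) equals: ε, if n·ε² ≤ q/p; γ·√(q³/(np)) + max{ √(q/(np)), ε·p }, if q/p < n·ε² ≤ p/q; and γ·(p−q)/√(n·p·q) + max{ √(q/(np)), √(p³/(n·q)) }, if n·ε² > p/q. -/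
open MeasureTheory Real Set

lemma mul_max_nonneg (k x y : ℝ) (hk : 0 ≤ k) : k * max x y = max (k * x) (k * y) := by
  rcases le_total x y with h | h
  · rw [max_eq_right h, max_eq_right (mul_le_mul_of_nonneg_left h hk)]
  · rw [max_eq_left h, max_eq_left (mul_le_mul_of_nonneg_left h hk)]

lemma integral_two_point {Ω : Type*} [MeasurableSpace Ω] (μ : Measure Ω)
    [IsProbabilityMeasure μ] {A B : Set Ω} (hA : MeasurableSet A) (hB : MeasurableSet B)
    (hAB : Disjoint A B) {p q : ℝ} (ca cb : ℝ) (hp : 0 ≤ p) (hq : 0 ≤ q) (hpq : p + q = 1)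
    (hμA : μ A = ENNReal.ofReal p) (hμB : μ B = ENNReal.ofReal q)
    (f : Ω → ℝ) (hfA : ∀ ω ∈ A, f ω = ca) (hfB : ∀ ω ∈ B, f ω = cb) :
    ∫ ω, f ω ∂μ = p * ca + q * cb := by
  have hUc : μ (A ∪ B)ᶜ = 0 := by
    have hU : μ (A ∪ B) = 1 := by
      rw [measure_union hAB hB, hμA, hμB, ← ENNReal.ofReal_add hp hq, hpq, ENNReal.ofReal_one]
    rwa [prob_compl_eq_zero_iff (hA.union hB)]
  have hmem : ∀ᵐ ω ∂μ, ω ∈ A ∪ B := by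
    rw [ae_iff]
    exact measure_mono_null (fun ω hω => hω) hUc
  have hae : f =ᵐ[μ] fun ω => A.indicator (fun _ => ca) ω + B.indicator (fun _ => cb) ω := by
    filter_upwards [hmem] with ω hω
    rcases hω with h | h
    · have hnB : ω ∉ B := fun hB' => (Set.disjoint_left.mp hAB h) hB'
      simp [Set.indicator_of_mem h, Set.indicator_of_notMem hnB, hfA ω h]
    · have hnA : ω ∉ A := fun hA' => (Set.disjoint_left.mp hAB hA') h
      simp [Set.indicator_of_mem h, Set.indicator_of_notMem hnA, hfB ω h]
  rw [integral_congr_ae hae, integral_add ((integrable_const ca).indicator hA)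
      ((integrable_const cb).indicator hB), integral_indicator_const _ hA,
    integral_indicator_const _ hB, measureReal_def, measureReal_def, hμA, hμB, ENNReal.toReal_ofReal hp,
    ENNReal.toReal_ofReal hq, smul_eq_mul, smul_eq_mul]

theorem rozovskii_fraction_gstar_two_point
    {Ω : Type*} [MeasurableSpace Ω] (μ : Measure Ω) [IsProbabilityMeasure μ]
    (n : ℕ) (hn : 0 < n) (p : ℝ) (hp : p ∈ Set.Ico (1/2 : ℝ) 1) (q : ℝ) (hq : q = 1 - p)
    (X : Ω → ℝ) (hX : Measurable X)
    (hXp : μ {ω | X ω = Real.sqrt (q / p)} = ENNReal.ofReal p)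
    (hXq : μ {ω | X ω = -Real.sqrt (p / q)} = ENNReal.ofReal q)
    (ε γ : ℝ) (hε : 0 < ε) (hγ : 0 < γ) :
    ((n : ℝ) * ε ^ 2 ≤ q / p →
      (Real.sqrt n)⁻¹ *
        (γ * |mu3 μ X (ε * Real.sqrt n)| +
          sSup ((fun z => z * sig2 μ X z) '' Set.Ioo (0 : ℝ) (ε * Real.sqrt n))) = ε) ∧
    (q / p < (n : ℝ) * ε ^ 2 → (n : ℝ) * ε ^ 2 ≤ p / q →
      (Real.sqrt n)⁻¹ *
        (γ * |mu3 μ X (ε * Real.sqrt n)| +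
          sSup ((fun z => z * sig2 μ X z) '' Set.Ioo (0 : ℝ) (ε * Real.sqrt n)))
        = γ * Real.sqrt (q ^ 3 / ((n : ℝ) * p)) +
            max (Real.sqrt (q / ((n : ℝ) * p))) (ε * p)) ∧
    (p / q < (n : ℝ) * ε ^ 2 →
      (Real.sqrt n)⁻¹ *
        (γ * |mu3 μ X (ε * Real.sqrt n)| +
          sSup ((fun z => z * sig2 μ X z) '' Set.Ioo (0 : ℝ) (ε * Real.sqrt n)))
        = γ * (p - q) / Real.sqrt ((n : ℝ) * p * q) +
            max (Real.sqrt (q / ((n : ℝ) * p))) (Real.sqrt (p ^ 3 / ((n : ℝ) * q)))) := by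
  obtain ⟨hp2, hp1⟩ := hp
  have hp0 : 0 < p := lt_of_lt_of_le (by norm_num) hp2
  have hq0 : 0 < q := by rw [hq]; linarith
  have hqp : q ≤ p := by rw [hq]; linarith
  have hpq1 : p + q = 1 := by rw [hq]; ring
  have hn0 : (0:ℝ) < (n:ℝ) := by exact_mod_cast hn
  set a := Real.sqrt (q/p) with ha_def
  set c := Real.sqrt (p/q) with hc_def
  have ha0 : 0 < a := Real.sqrt_pos.mpr (div_pos hq0 hp0)
  have hc0 : 0 < c := Real.sqrt_pos.mpr (div_pos hp0 hq0)
  have ha2 : a^2 = q/p := Real.sq_sqrt (div_nonneg hq0.le hp0.le)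
  have hc2 : c^2 = p/q := Real.sq_sqrt (div_nonneg hp0.le hq0.le)
  have hac : a ≤ c := Real.sqrt_le_sqrt (by rw [div_le_div_iff₀ hp0 hq0]; nlinarith)
  have hsn : 0 < Real.sqrt n := Real.sqrt_pos.mpr hn0
  set T := ε * Real.sqrt n with hT_def
  have hT0 : 0 < T := mul_pos hε hsn
  have hT : T = Real.sqrt ((n:ℝ) * ε^2) := by
    rw [Real.sqrt_mul hn0.le, Real.sqrt_sq hε.le]; ring
  have hA : MeasurableSet {ω | X ω = a} := hX (measurableSet_singleton a)
  have hB : MeasurableSet {ω | X ω = -c} := hX (measurableSet_singleton (-c))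
  have hAB : Disjoint {ω | X ω = a} {ω | X ω = -c} := by
    rw [Set.disjoint_left]
    intro ω h1 h2
    simp only [Set.mem_setOf_eq] at h1 h2
    rw [h1] at h2
    linarith
  have hint : ∀ g : ℝ → ℝ, ∫ ω, g (X ω) ∂μ = p * g a + q * g (-c) := by
    intro g
    exact integral_two_point μ hA hB hAB (g a) (g (-c)) hp0.le hq0.le hpq1 hXp hXq
      (fun ω => g (X ω)) (fun ω h => by show g (X ω) = g a; rw [Set.mem_setOf_eq] at h; rw [h])
      (fun ω h => by show g (X ω) = g (-c); rw [Set.mem_setOf_eq] at h; rw [h])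
  have hmu3 : ∀ z, mu3 μ X z
      = p * (if a < z then a^3 else 0) + q * (if c < z then -(c^3) else 0) := by
    intro z
    have h := hint (fun x => if |x| < z then x ^ 3 else 0)
    rw [abs_of_pos ha0, abs_neg, abs_of_pos hc0] at h
    simp only [mu3]
    rw [h]
    congr 2
    split_ifs <;> ring
  have hsig2 : ∀ z, sig2 μ X z = (if z ≤ a then q else 0) + (if z ≤ c then p else 0) := by
    intro z
    have h := hint (fun x => if z ≤ |x| then x ^ 2 else 0)
    rw [abs_of_pos ha0, abs_neg, abs_of_pos hc0] at h
    simp only [sig2]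
    rw [h]
    congr 1
    · split_ifs
      · rw [ha2]; field_simp
      · ring
    · split_ifs
      · rw [show (-c)^2 = c^2 by ring, hc2]; field_simp
      · ring
  have hs1 : ∀ z, z ≤ a → z * sig2 μ X z = z := by
    intro z hz
    rw [hsig2, if_pos hz, if_pos (hz.trans hac), show q + p = 1 by linarith]
    ring
  have hs2 : ∀ z, a < z → z ≤ c → z * sig2 μ X z = z * p := by
    intro z h1 h2
    rw [hsig2, if_neg (not_le.mpr h1), if_pos h2, zero_add]
  have hs3 : ∀ z, c < z → z * sig2 μ X z = 0 := by
    intro z h1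
    rw [hsig2, if_neg (not_le.mpr (lt_of_le_of_lt hac h1)), if_neg (not_le.mpr h1)]
    ring
  have ea : Real.sqrt (q/((n:ℝ)*p)) = a * (Real.sqrt n)⁻¹ := by
    rw [show q/((n:ℝ)*p) = (q/p)/(n:ℝ) by rw [div_div, mul_comm],
      Real.sqrt_div (div_nonneg hq0.le hp0.le), div_eq_mul_inv]
  have eb : Real.sqrt (q^3/((n:ℝ)*p)) = q * a * (Real.sqrt n)⁻¹ := by
    rw [show q^3/((n:ℝ)*p) = (q^2*(q/p))/(n:ℝ) by field_simp,
      Real.sqrt_div (mul_nonneg (sq_nonneg q) (div_nonneg hq0.le hp0.le)),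
      Real.sqrt_mul (sq_nonneg q), Real.sqrt_sq hq0.le, div_eq_mul_inv]
  have ec : Real.sqrt (p^3/((n:ℝ)*q)) = p * c * (Real.sqrt n)⁻¹ := by
    rw [show p^3/((n:ℝ)*q) = (p^2*(p/q))/(n:ℝ) by field_simp,
      Real.sqrt_div (mul_nonneg (sq_nonneg p) (div_nonneg hp0.le hq0.le)),
      Real.sqrt_mul (sq_nonneg p), Real.sqrt_sq hp0.le, div_eq_mul_inv]
  have espq : a * Real.sqrt (p*q) = q := by
    rw [ha_def, ← Real.sqrt_mul (div_nonneg hq0.le hp0.le),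
      show q/p*(p*q) = q^2 by field_simp, Real.sqrt_sq hq0.le]
  have espq2 : c * Real.sqrt (p*q) = p := by
    rw [hc_def, ← Real.sqrt_mul (div_nonneg hp0.le hq0.le),
      show p/q*(p*q) = p^2 by field_simp, Real.sqrt_sq hp0.le]
  have hsqn : Real.sqrt ((n:ℝ)*p*q) = Real.sqrt n * Real.sqrt (p*q) := by
    rw [mul_assoc, Real.sqrt_mul hn0.le]
  have hpa3 : p * a^3 = q * a := by
    rw [show a^3 = a^2*a by ring, ha2]; field_simp
  have hqc3 : q * c^3 = p * c := by
    rw [show c^3 = c^2*c by ring, hc2]; field_simp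
  refine ⟨?_, ?_, ?_⟩
  · -- Case 1 : nε² ≤ q/p
    intro h1
    have hTa : T ≤ a := by rw [hT]; exact Real.sqrt_le_sqrt h1
    have hmu : mu3 μ X T = 0 := by
      rw [hmu3, if_neg (not_lt.mpr hTa), if_neg (not_lt.mpr (hTa.trans hac))]; ring
    have hsup : sSup ((fun z => z * sig2 μ X z) '' Set.Ioo (0:ℝ) T) = T := by
      apply csSup_eq_of_forall_le_of_forall_lt_exists_gt
      · exact ⟨T/2 * sig2 μ X (T/2), ⟨T/2, ⟨by linarith, by linarith⟩, rfl⟩⟩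
      · rintro x ⟨z, ⟨hz0, hzT⟩, rfl⟩
        simp only []
        rw [hs1 z (hzT.le.trans hTa)]
        exact hzT.le
      · intro w hw
        set z := max (T/2) ((w+T)/2) with hz_def
        have hz0 : 0 < z := lt_of_lt_of_le (by linarith) (le_max_left _ _)
        have hzT : z < T := max_lt (by linarith) (by linarith)
        refine ⟨z * sig2 μ X z, ⟨z, ⟨hz0, hzT⟩, rfl⟩, ?_⟩
        rw [hs1 z (hzT.le.trans hTa)]
        exact lt_of_lt_of_le (by linarith) (le_max_right _ _)
    rw [hmu, hsup, hT_def]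
    simp only [abs_zero, mul_zero, zero_add]
    field_simp
  · -- Case 2 : q/p < nε² ≤ p/q
    intro h1 h2
    have haT : a < T := by rw [hT]; exact Real.sqrt_lt_sqrt (div_nonneg hq0.le hp0.le) h1
    have hTc : T ≤ c := by rw [hT]; exact Real.sqrt_le_sqrt h2
    have hmu : mu3 μ X T = p * a^3 := by
      rw [hmu3, if_pos haT, if_neg (not_lt.mpr hTc)]; ring
    have hsup : sSup ((fun z => z * sig2 μ X z) '' Set.Ioo (0:ℝ) T) = max a (T*p) := by
      apply csSup_eq_of_forall_le_of_forall_lt_exists_gt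
      · exact ⟨a * sig2 μ X a, ⟨a, ⟨ha0, haT⟩, rfl⟩⟩
      · rintro x ⟨z, ⟨hz0, hzT⟩, rfl⟩
        simp only []
        rcases le_or_gt z a with hza | hza
        · rw [hs1 z hza]; exact le_max_of_le_left hza
        · rw [hs2 z hza (hzT.le.trans hTc)]
          exact le_max_of_le_right (mul_le_mul_of_nonneg_right hzT.le hp0.le)
      · intro w hw
        rcases lt_or_ge w a with hwa | hwa
        · exact ⟨a * sig2 μ X a, ⟨a, ⟨ha0, haT⟩, rfl⟩, by rw [hs1 a le_rfl]; exact hwa⟩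
        · have hwTp : w < T * p := by
            rcases lt_max_iff.mp hw with h | h
            · linarith
            · exact h
          set m := max a (w/p) with hm_def
          have hmT : m < T := max_lt haT (by rw [div_lt_iff₀ hp0]; linarith [mul_comm T p])
          set z := (m + T)/2 with hz_def
          have hmz : m < z := by rw [hz_def]; linarith
          have hzT : z < T := by rw [hz_def]; linarith
          have hza : a < z := lt_of_le_of_lt (le_max_left _ _) hmz
          have hz0 : 0 < z := ha0.trans hza
          refine ⟨z * sig2 μ X z, ⟨z, ⟨hz0, hzT⟩, rfl⟩, ?_⟩
          rw [hs2 z hza (hzT.le.trans hTc)]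
          have hwp : w/p < z := lt_of_le_of_lt (le_max_right _ _) hmz
          exact (div_lt_iff₀ hp0).mp hwp
    have hmax : max (a * (Real.sqrt n)⁻¹) (ε*p) = (Real.sqrt n)⁻¹ * max a (T*p) := by
      rw [mul_max_nonneg _ _ _ (inv_nonneg.mpr hsn.le), hT_def]
      congr 1
      · ring
      · field_simp
    rw [hmu, abs_of_nonneg (mul_nonneg hp0.le (pow_nonneg ha0.le 3)), hsup, ea, eb, hpa3, hmax]
    ring
  · -- Case 3 : p/q < nε²
    intro h3
    have hcT : c < T := by rw [hT]; exact Real.sqrt_lt_sqrt (div_nonneg hp0.le hq0.le) h3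
    have haT : a < T := lt_of_le_of_lt hac hcT
    have hmu : mu3 μ X T = q*a - p*c := by
      rw [hmu3, if_pos haT, if_pos hcT]
      linear_combination hpa3 - hqc3
    have habs : |mu3 μ X T| = p*c - q*a := by
      rw [hmu, abs_of_nonpos (by linarith [mul_le_mul hqp hac ha0.le hp0.le])]
      ring
    have hsup : sSup ((fun z => z * sig2 μ X z) '' Set.Ioo (0:ℝ) T) = max a (c*p) := by
      apply csSup_eq_of_forall_le_of_forall_lt_exists_gt
      · exact ⟨a * sig2 μ X a, ⟨a, ⟨ha0, haT⟩, rfl⟩⟩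
      · rintro x ⟨z, ⟨hz0, hzT⟩, rfl⟩
        simp only []
        rcases le_or_gt z a with hza | hza
        · rw [hs1 z hza]; exact le_max_of_le_left hza
        · rcases le_or_gt z c with hzc | hzc
          · rw [hs2 z hza hzc]
            exact le_max_of_le_right (mul_le_mul_of_nonneg_right hzc hp0.le)
          · rw [hs3 z hzc]; exact le_max_of_le_left ha0.le
      · intro w hw
        rcases lt_or_ge w a with hwa | hwa
        · exact ⟨a * sig2 μ X a, ⟨a, ⟨ha0, haT⟩, rfl⟩, by rw [hs1 a le_rfl]; exact hwa⟩
        · have hwcp : w < c * p := by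
            rcases lt_max_iff.mp hw with h | h
            · linarith
            · exact h
          refine ⟨c * sig2 μ X c, ⟨c, ⟨hc0, hcT⟩, rfl⟩, ?_⟩
          rcases lt_or_ge a c with h | h
          · rw [hs2 c h le_rfl]; exact hwcp
          · rw [hs1 c h]
            have := mul_lt_mul_of_pos_left hp1 hc0
            linarith
    have hkey : (p*c - q*a) * Real.sqrt (p*q) = p - q := by
      linear_combination p * espq2 - q * espq + (p - q) * hpq1
    have hspq : 0 < Real.sqrt (p*q) := Real.sqrt_pos.mpr (mul_pos hp0 hq0)
    have hγterm : (Real.sqrt n)⁻¹ * (γ * (p*c - q*a))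
        = γ*(p-q)/Real.sqrt ((n:ℝ)*p*q) := by
      rw [hsqn, eq_div_iff (by positivity)]
      calc (Real.sqrt n)⁻¹ * (γ * (p*c - q*a)) * (Real.sqrt n * Real.sqrt (p*q))
          = γ * ((p*c - q*a) * Real.sqrt (p*q)) * ((Real.sqrt n)⁻¹ * Real.sqrt n) := by ring
        _ = γ*(p-q) := by rw [hkey, inv_mul_cancel₀ hsn.ne']; ring
    have hmax : max (a * (Real.sqrt n)⁻¹) (p * c * (Real.sqrt n)⁻¹)
        = (Real.sqrt n)⁻¹ * max a (c*p) := by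
      rw [mul_max_nonneg _ _ _ (inv_nonneg.mpr hsn.le)]
      congr 1 <;> ring
    rw [habs, hsup, ea, ec, hmax, ← hγterm]
    ring
end

section
/- On the interval p ∈ (0,1) the function φ(p) = Φ(√(p/(1−p))) is strictly increasing, its derivative equals φ'(p) = exp(−p/(2(1−p))) / (2·√(2π)·√(p·(1−p)³)), and this derivative is strictly decreasing on (0,1). -/
open MeasureTheory Real Set

/-- The standard normal distribution function. -/
noncomputable def Phi (x : ℝ) : ℝ :=
  ∫ t in Set.Iic x, Real.exp (-t ^ 2 / 2) / Real.sqrt (2 * Real.pi)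

lemma gauss_integrable : Integrable (fun t : ℝ => Real.exp (-t ^ 2 / 2) / Real.sqrt (2 * Real.pi)) := by
  have h : Integrable (fun t : ℝ => Real.exp (-(1/2) * t ^ 2)) := integrable_exp_neg_mul_sq (by norm_num)
  have := h.div_const (Real.sqrt (2 * Real.pi))
  convert this using 2 with t
  ring_nf

lemma Phi_hasDerivAt (x : ℝ) :
    HasDerivAt Phi (Real.exp (-x ^ 2 / 2) / Real.sqrt (2 * Real.pi)) x := by
  set g : ℝ → ℝ := fun t => Real.exp (-t ^ 2 / 2) / Real.sqrt (2 * Real.pi) with hg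
  have hgc : Continuous g := by
    apply Continuous.div_const
    exact Real.continuous_exp.comp (by continuity)
  have h1 : HasDerivAt (fun u => ∫ t in (0:ℝ)..u, g t) (g x) x :=
    intervalIntegral.integral_hasDerivAt_right gauss_integrable.intervalIntegrable
      (hgc.stronglyMeasurableAtFilter _ _) hgc.continuousAt
  have heq : ∀ u : ℝ, Phi u = Phi 0 + ∫ t in (0:ℝ)..u, g t := by
    intro u
    rw [← intervalIntegral.integral_Iic_sub_Iic gauss_integrable.integrableOn
      gauss_integrable.integrableOn]
    simp [Phi]
  have : HasDerivAt (fun u => Phi 0 + ∫ t in (0:ℝ)..u, g t) (g x) x := (h1.const_add _)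
  exact this.congr_of_eventuallyEq (Filter.Eventually.of_forall heq)

lemma sqrt_key {p : ℝ} (hp0 : 0 < p) (hp1 : p < 1) :
    Real.sqrt (p * (1 - p) ^ 3) = Real.sqrt (p / (1 - p)) * (1 - p) ^ 2 := by
  have h1p : (0:ℝ) < 1 - p := by linarith
  have : p * (1 - p) ^ 3 = (p / (1 - p)) * ((1 - p) ^ 2) ^ 2 := by
    field_simp
  rw [this, Real.sqrt_mul (by positivity), Real.sqrt_sq (sq_nonneg _)]

lemma part2 {p : ℝ} (hp : p ∈ Set.Ioo (0:ℝ) 1) :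
    HasDerivAt (fun p : ℝ => Phi (Real.sqrt (p / (1 - p))))
      (Real.exp (-p / (2 * (1 - p))) /
        (2 * Real.sqrt (2 * Real.pi) * Real.sqrt (p * (1 - p) ^ 3))) p := by
  obtain ⟨hp0, hp1⟩ := hp
  have h1p : (0:ℝ) < 1 - p := by linarith
  have hqpos : 0 < p / (1 - p) := by positivity
  have hq : HasDerivAt (fun p : ℝ => p / (1 - p)) (1 / (1 - p) ^ 2) p := by
    have := (hasDerivAt_id p).div ((hasDerivAt_const p (1:ℝ)).sub (hasDerivAt_id p)) h1p.ne'
    refine this.congr_deriv ?_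
    simp only [Pi.sub_apply, id_eq]
    field_simp
    ring
  have hs : HasDerivAt (fun p : ℝ => Real.sqrt (p / (1 - p)))
      ((1 / (1 - p) ^ 2) / (2 * Real.sqrt (p / (1 - p)))) p := hq.sqrt hqpos.ne'
  have hc := (Phi_hasDerivAt (Real.sqrt (p / (1 - p)))).comp p hs
  refine hc.congr_deriv ?_
  have hsq : Real.sqrt (p / (1 - p)) ^ 2 = p / (1 - p) := Real.sq_sqrt hqpos.le
  rw [hsq, sqrt_key hp0 hp1]
  have hS : 0 < Real.sqrt (p / (1 - p)) := Real.sqrt_pos.2 hqpos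
  have hC : 0 < Real.sqrt (2 * Real.pi) := Real.sqrt_pos.2 (by positivity)
  have hA : -(p / (1 - p)) / 2 = -p / (2 * (1 - p)) := by
    rw [neg_div, neg_div, div_div, mul_comm]
  rw [← hA]
  field_simp

theorem phi_monotone_deriv_antitone :
    StrictMonoOn (fun p : ℝ => Phi (Real.sqrt (p / (1 - p)))) (Set.Ioo 0 1) ∧
    (∀ p ∈ Set.Ioo (0 : ℝ) 1,
      HasDerivAt (fun p : ℝ => Phi (Real.sqrt (p / (1 - p))))
        (Real.exp (-p / (2 * (1 - p))) /
          (2 * Real.sqrt (2 * Real.pi) * Real.sqrt (p * (1 - p) ^ 3))) p) ∧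
    StrictAntiOn
      (fun p : ℝ => Real.exp (-p / (2 * (1 - p))) /
        (2 * Real.sqrt (2 * Real.pi) * Real.sqrt (p * (1 - p) ^ 3)))
      (Set.Ioo 0 1) := by
  set h : ℝ → ℝ := fun p => Real.exp (-p / (2 * (1 - p))) /
      (2 * Real.sqrt (2 * Real.pi) * Real.sqrt (p * (1 - p) ^ 3)) with hh_def
  -- derivative of h
  have hderiv : ∀ p ∈ Set.Ioo (0:ℝ) 1,
      HasDerivAt h (-(Real.sqrt (2 * Real.pi) * (1 - p) * (2 * p - 1) ^ 2 /
        Real.sqrt (p * (1 - p) ^ 3)) * Real.exp (-p / (2 * (1 - p))) /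
        (2 * Real.sqrt (2 * Real.pi) * Real.sqrt (p * (1 - p) ^ 3)) ^ 2) p := by
    intro p hp
    obtain ⟨hp0, hp1⟩ := hp
    have h1p : (0:ℝ) < 1 - p := by linarith
    have hB : (0:ℝ) < p * (1 - p) ^ 3 := by positivity
    have hS : 0 < Real.sqrt (p * (1 - p) ^ 3) := Real.sqrt_pos.2 hB
    have hs2 : Real.sqrt (p * (1 - p) ^ 3) ^ 2 = p * (1 - p) ^ 3 := Real.sq_sqrt hB.le
    have hA : HasDerivAt (fun p : ℝ => -p / (2 * (1 - p))) (-(1 / (2 * (1 - p) ^ 2))) p := by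
      have := ((hasDerivAt_id p).neg.div
        (((hasDerivAt_const p (1:ℝ)).sub (hasDerivAt_id p)).const_mul 2)
        (by positivity : (2 * (1 - p)) ≠ 0))
      refine this.congr_deriv ?_
      simp only [Pi.sub_apply, Pi.neg_apply, id_eq]
      field_simp
      ring
    have hE := hA.exp
    have hBd : HasDerivAt (fun p : ℝ => p * (1 - p) ^ 3) ((1 - p) ^ 2 * (1 - 4 * p)) p := by
      have := (hasDerivAt_id p).mul
        (((hasDerivAt_const p (1:ℝ)).sub (hasDerivAt_id p)).pow 3)
      refine this.congr_deriv ?_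
      simp only [Pi.sub_apply, Pi.pow_apply, id_eq]
      ring
    have hSd := hBd.sqrt hB.ne'
    have hDd := hSd.const_mul (2 * Real.sqrt (2 * Real.pi))
    have hdd := hE.div hDd (by positivity)
    refine hdd.congr_deriv ?_
    set s := Real.sqrt (p * (1 - p) ^ 3) with hs_def
    set c := Real.sqrt (2 * Real.pi) with hc_def
    have key : (-(1 / (2 * (1 - p) ^ 2))) * (2 * c * s)
        - 2 * c * ((1 - p) ^ 2 * (1 - 4 * p) / (2 * s))
        = -(c * (1 - p) * (2 * p - 1) ^ 2 / s) := by
      field_simp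
      linear_combination (-c) * hs2
    congr 1
    rw [← key]
    ring
  have hC : 0 < Real.sqrt (2 * Real.pi) := Real.sqrt_pos.2 (by positivity)
  refine ⟨?_, fun p hp => part2 hp, ?_⟩
  · apply strictMonoOn_of_deriv_pos (convex_Ioo 0 1)
    · intro p hp
      exact ((part2 hp).continuousAt).continuousWithinAt
    · intro p hp
      rw [interior_Ioo] at hp
      rw [(part2 hp).deriv]
      obtain ⟨hp0, hp1⟩ := hp
      have h1p : (0:ℝ) < 1 - p := by linarith
      positivity
  · -- strict anti on two pieces
    have hnegderiv : ∀ p ∈ Set.Ioo (0:ℝ) 1, p ≠ 1/2 → deriv h p < 0 := by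
      intro p hp hne
      rw [(hderiv p hp).deriv]
      obtain ⟨hp0, hp1⟩ := hp
      have h1p : (0:ℝ) < 1 - p := by linarith
      have hB : (0:ℝ) < p * (1 - p) ^ 3 := by positivity
      have hS : 0 < Real.sqrt (p * (1 - p) ^ 3) := Real.sqrt_pos.2 hB
      have h2p : (2 * p - 1) ≠ 0 := by
        intro h; apply hne; linarith
      have h2p2 : 0 < (2 * p - 1) ^ 2 := by positivity
      apply div_neg_of_neg_of_pos
      · apply mul_neg_of_neg_of_pos
        · rw [neg_lt_zero]
          positivity
        · exact Real.exp_pos _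
      · positivity
    have hcont : ∀ p ∈ Set.Ioo (0:ℝ) 1, ContinuousAt h p := fun p hp =>
      (hderiv p hp).continuousAt
    have anti1 : StrictAntiOn h (Set.Ioc 0 (1/2 : ℝ)) := by
      apply strictAntiOn_of_deriv_neg (convex_Ioc 0 (1/2:ℝ))
      · intro p hp
        exact (hcont p ⟨hp.1, lt_of_le_of_lt hp.2 (by norm_num)⟩).continuousWithinAt
      · intro p hp
        rw [interior_Ioc] at hp
        exact hnegderiv p ⟨hp.1, lt_trans hp.2 (by norm_num)⟩ (ne_of_lt hp.2)
    have anti2 : StrictAntiOn h (Set.Ico (1/2 : ℝ) 1) := by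
      apply strictAntiOn_of_deriv_neg (convex_Ico (1/2:ℝ) 1)
      · intro p hp
        exact (hcont p ⟨lt_of_lt_of_le (by norm_num) hp.1, hp.2⟩).continuousWithinAt
      · intro p hp
        rw [interior_Ico] at hp
        exact hnegderiv p ⟨lt_trans (by norm_num) hp.1, hp.2⟩ (ne_of_gt hp.1)
    intro x hx y hy hxy
    rcases le_or_gt y (1/2 : ℝ) with hy2 | hy2
    · exact anti1 ⟨hx.1, le_of_lt (lt_of_lt_of_le hxy hy2)⟩ ⟨hy.1, hy2⟩ hxy
    · rcases le_or_gt (1/2 : ℝ) x with hx2 | hx2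
      · exact anti2 ⟨hx2, hx.2⟩ ⟨le_of_lt (lt_of_le_of_lt hx2 hxy), hy.2⟩ hxy
      · exact lt_trans (anti2 ⟨le_refl _, by norm_num⟩ ⟨hy2.le, hy.2⟩ hy2)
          (anti1 ⟨hx.1, hx2.le⟩ ⟨by norm_num, le_refl _⟩ hx2)
end

section
/- Let p ∈ (0,1), q = 1−p, and let X be a random variable with P(X = √(q/p)) = p and P(X = −√(p/q)) = q. Then sup_{x ∈ ℝ} |P(X < x) − Φ(x)| = Φ(√(p/q)) − p if 0 < p < 1/2, and sup_{x ∈ ℝ} |P(X < x) − Φ(x)| = Φ(√(q/p)) − q if 1/2 ≤ p < 1. -/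
open MeasureTheory Real Set intervalIntegral

noncomputable def phi (t : ℝ) : ℝ := Real.exp (-t ^ 2 / 2) / Real.sqrt (2 * Real.pi)

lemma phi_eq : phi = fun t => Real.exp (-(1/2) * t ^ 2) / Real.sqrt (2 * Real.pi) := by
  funext t; simp only [phi]; ring_nf

lemma integrable_phi : Integrable phi := by
  rw [phi_eq]
  exact (integrable_exp_neg_mul_sq (by norm_num : (0:ℝ) < 1/2)).div_const _

lemma phi_nonneg (t : ℝ) : 0 ≤ phi t :=
  div_nonneg (Real.exp_nonneg _) (Real.sqrt_nonneg _)

lemma integral_phi : ∫ t, phi t = 1 := by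
  rw [phi_eq]
  rw [MeasureTheory.integral_div, integral_gaussian]
  rw [div_eq_one_iff_eq (by positivity)]
  rw [show Real.pi / (1/2) = 2 * Real.pi by ring]

lemma Phi_sub (a b : ℝ) : Phi b - Phi a = ∫ t in a..b, phi t :=
  integral_Iic_sub_Iic integrable_phi.integrableOn integrable_phi.integrableOn

lemma phi_neg (t : ℝ) : phi (-t) = phi t := by simp [phi]

lemma Phi_add_Ioi (x : ℝ) : Phi x + (∫ t in Ioi x, phi t) = 1 := by
  rw [show Phi x = ∫ t in Iic x, phi t from rfl,
    integral_Iic_add_Ioi integrable_phi.integrableOn integrable_phi.integrableOn, integral_phi]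

lemma Phi_neg (x : ℝ) : Phi (-x) = 1 - Phi x := by
  have h1 : Phi (-x) = ∫ t in Ioi x, phi t := by
    rw [show Phi (-x) = ∫ t in Iic (-x), phi t from rfl]
    rw [← integral_comp_neg_Ioi]
    simp only [phi_neg]
  rw [h1, eq_sub_iff_add_eq, add_comm, Phi_add_Ioi]

lemma Phi_zero : Phi 0 = 1/2 := by
  have := Phi_neg 0
  rw [neg_zero] at this
  linarith

lemma Phi_eq_add (x : ℝ) : Phi x = 1/2 + ∫ t in (0:ℝ)..x, phi t := by
  have := Phi_sub 0 x
  rw [Phi_zero] at this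
  linarith

lemma Phi_mono : Monotone Phi := by
  intro a b hab
  have := Phi_sub a b
  have h2 : 0 ≤ ∫ t in a..b, phi t :=
    intervalIntegral.integral_nonneg hab (fun u _ => phi_nonneg u)
  linarith

lemma Phi_continuous : Continuous Phi := by
  have : Continuous fun x => ∫ t in (0:ℝ)..x, phi t :=
    intervalIntegral.continuous_primitive
      (fun a b => integrable_phi.intervalIntegrable) 0
  have h2 : Phi = fun x => 1/2 + ∫ t in (0:ℝ)..x, phi t := funext Phi_eq_add
  rw [h2]; exact continuous_const.add this

lemma Phi_le_one (x : ℝ) : Phi x ≤ 1 := by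
  have := Phi_add_Ioi x
  have h2 : 0 ≤ ∫ t in Ioi x, phi t := setIntegral_nonneg measurableSet_Ioi fun t _ => phi_nonneg t
  linarith

lemma Phi_nonneg (x : ℝ) : 0 ≤ Phi x :=
  setIntegral_nonneg measurableSet_Iic fun t _ => phi_nonneg t

lemma sqrt_two_pi_pos : (0:ℝ) < Real.sqrt (2*Real.pi) := Real.sqrt_pos.2 (by positivity)

lemma sqrt_two_pi_le : Real.sqrt (2*Real.pi) ≤ 2.51 := by
  rw [show (2.51:ℝ) = Real.sqrt (2.51^2) by rw [Real.sqrt_sq (by norm_num)]]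
  apply Real.sqrt_le_sqrt
  nlinarith [Real.pi_lt_d2]

lemma sqrt_two_pi_ge : (2.44:ℝ) ≤ Real.sqrt (2*Real.pi) := by
  rw [show (2.44:ℝ) = Real.sqrt (2.44^2) by rw [Real.sqrt_sq (by norm_num)]]
  apply Real.sqrt_le_sqrt
  nlinarith [Real.pi_gt_d6]

lemma primitive_lb {c : ℝ} (hc : 0 ≤ c) :
    (c - c^3/6) / Real.sqrt (2*Real.pi) ≤ ∫ t in (0:ℝ)..c, phi t := by
  have h1 : ∫ t in (0:ℝ)..c, (1 - t^2/2) / Real.sqrt (2*Real.pi)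
      = (c - c^3/6) / Real.sqrt (2*Real.pi) := by
    rw [intervalIntegral.integral_div]
    rw [intervalIntegral.integral_sub intervalIntegrable_const
      (IntervalIntegrable.div_const (intervalIntegral.intervalIntegrable_pow 2) 2)]
    simp [intervalIntegral.integral_div, integral_pow]
    ring
  rw [← h1]
  apply intervalIntegral.integral_mono_on hc
  · exact (intervalIntegrable_const.sub
      ((intervalIntegral.intervalIntegrable_pow 2).div_const 2)).div_const _
  · exact integrable_phi.intervalIntegrable
  · intro x _
    unfold phi
    gcongr
    have := Real.add_one_le_exp (-x^2/2)
    linarith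

lemma increment_ub {r s : ℝ} (hr : 0 ≤ r) (hrs : r ≤ s) :
    (∫ t in r..s, phi t) ≤ (s - r) * (Real.exp (-r^2/2) / Real.sqrt (2*Real.pi)) := by
  have h1 : ∫ t in r..s, (Real.exp (-r^2/2) / Real.sqrt (2*Real.pi))
      = (s - r) * (Real.exp (-r^2/2) / Real.sqrt (2*Real.pi)) := by
    simp [intervalIntegral.integral_const, smul_eq_mul]
    ring
  rw [← h1]
  apply intervalIntegral.integral_mono_on hrs integrable_phi.intervalIntegrable
    intervalIntegrable_const
  intro x hx
  unfold phi
  have h2 : Real.exp (-x^2/2) ≤ Real.exp (-r^2/2) :=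
    Real.exp_le_exp.2 (by nlinarith [hx.1, hx.2, hr])
  have h3 : (0:ℝ) < Real.sqrt (2*Real.pi) := sqrt_two_pi_pos
  exact div_le_div_of_nonneg_right h2 h3.le |>.trans_eq rfl

set_option maxHeartbeats 1000000 in
/-- Core inequality: `1 + r ≤ 2 Φ(√(r/(1-r)))` for `0 < r ≤ 1/2`. -/
lemma core_ineq {r : ℝ} (h0 : 0 < r) (h2 : r ≤ 1/2) :
    1 + r ≤ 2 * Phi (Real.sqrt (r/(1-r))) := by
  have h1r : (0:ℝ) < 1 - r := by linarith
  set c := Real.sqrt (r/(1-r)) with hc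
  clear_value c
  have hc0 : 0 < c := by rw [hc]; exact Real.sqrt_pos.2 (by positivity)
  have hc2 : c^2 = r/(1-r) := by rw [hc]; exact Real.sq_sqrt (by positivity)
  have hc1 : c ≤ 1 := by
    rw [hc]
    have h' : r/(1-r) ≤ 1 := by rw [div_le_one h1r]; linarith
    simpa using Real.sqrt_le_sqrt h'
  have hr_eq : r = c^2/(1+c^2) := by rw [hc2]; field_simp; ring
  have hs := sqrt_two_pi_le
  have hs0 := sqrt_two_pi_pos
  have hcsq : c^2 ≤ 1 := by nlinarith
  have hpoly : Real.sqrt (2*Real.pi) * c ≤ 2 * (1 - c^2/6) * (1 + c^2) := by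
    have h1 : Real.sqrt (2*Real.pi) * c ≤ 2.51 * c :=
      mul_le_mul_of_nonneg_right hs hc0.le
    nlinarith [sq_nonneg (4*c - 3.765), mul_nonneg (mul_nonneg hc0.le hc0.le) (sub_nonneg.2 hcsq)]
  have h4 : Real.sqrt (2*Real.pi) * c^2 ≤ 2*(c - c^3/6)*(1+c^2) := by
    nlinarith [mul_le_mul_of_nonneg_left hpoly hc0.le]
  have hdiv : r / 2 ≤ (c - c^3/6) / Real.sqrt (2*Real.pi) := by
    rw [hr_eq, div_div, div_le_div_iff₀ (by positivity) hs0]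
    nlinarith
  have hprim := primitive_lb hc0.le
  have hPhi := Phi_eq_add c
  linarith

set_option maxHeartbeats 1000000 in
/-- Cross inequality: `Φ(√((1-r)/r)) - Φ(√(r/(1-r))) ≤ 1 - 2r` for `0 < r ≤ 1/2`. -/
lemma cross_ineq {r : ℝ} (h0 : 0 < r) (h2 : r ≤ 1/2) :
    Phi (Real.sqrt ((1-r)/r)) - Phi (Real.sqrt (r/(1-r))) ≤ 1 - 2*r := by
  have h1r : (0:ℝ) < 1 - r := by linarith
  set c := Real.sqrt (r/(1-r)) with hc
  clear_value c
  have hc0 : 0 < c := by rw [hc]; exact Real.sqrt_pos.2 (by positivity)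
  have hc2 : c^2 = r/(1-r) := by rw [hc]; exact Real.sq_sqrt (by positivity)
  have hc1 : c ≤ 1 := by
    rw [hc]
    have h' : r/(1-r) ≤ 1 := by rw [div_le_one h1r]; linarith
    simpa using Real.sqrt_le_sqrt h'
  have hcsq : c^2 ≤ 1 := by nlinarith
  have hB : Real.sqrt ((1-r)/r) = 1/c := by
    rw [hc, one_div, ← Real.sqrt_inv]
    congr 1
    field_simp
  have hr_eq : r = c^2/(1+c^2) := by rw [hc2]; field_simp; ring
  have hs := sqrt_two_pi_le
  have hsge := sqrt_two_pi_ge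
  have hs0 := sqrt_two_pi_pos
  rw [hB]
  rcases le_or_gt (c^2) (1/2) with hhalf | hhalf
  · -- small c
    have hPhiB : Phi (1/c) ≤ 1 := Phi_le_one _
    have hprim := primitive_lb hc0.le
    have hPhic := Phi_eq_add c
    have hgoal : 2*r - 1/2 ≤ (c - c^3/6) / Real.sqrt (2*Real.pi) := by
      have hnn : 0 ≤ (c - c^3/6) / Real.sqrt (2*Real.pi) := by
        apply div_nonneg _ hs0.le
        nlinarith
      rcases le_or_gt (c^2) (1/3) with h3 | h3
      · have hr4 : r ≤ 1/4 := by
          rw [hr_eq, div_le_iff₀ (by positivity : (0:ℝ) < 1 + c^2)]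
          nlinarith
        linarith
      · have hc06 : 0.57 ≤ c := by nlinarith
        have key2 : Real.sqrt (2*Real.pi) * (3*c^2 - 1) ≤ 2*(1+c^2)*(c - c^3/6) := by
          have h1 : Real.sqrt (2*Real.pi) * (3*c^2-1) ≤ 2.51 * (3*c^2-1) :=
            mul_le_mul_of_nonneg_right hs (by nlinarith)
          have hc07 : c ≤ 0.7072 := by nlinarith
          nlinarith [mul_nonneg (sub_nonneg.2 hc06) (sub_nonneg.2 hc07),
            mul_nonneg (mul_nonneg (sub_nonneg.2 hc06) (sub_nonneg.2 hc07)) hc0.le,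
            mul_nonneg (mul_nonneg hc0.le hc0.le) hc0.le, sq_nonneg (c-0.64)]
        have e : 2*r - 1/2 = (3*c^2-1)/(2*(1+c^2)) := by
          rw [hr_eq]; field_simp; ring
        rw [e, div_le_div_iff₀ (by positivity) hs0]
        nlinarith
    linarith
  · -- large c
    have hcinv : c ≤ 1/c := by
      rw [le_div_iff₀ hc0]; nlinarith
    have hc7 : 0.7 ≤ c := by nlinarith
    have hPhidiff : Phi (1/c) - Phi c = ∫ t in c..(1/c), phi t := Phi_sub c (1/c)
    have hinc := increment_ub hc0.le hcinv
    have hexp : Real.exp (-c^2/2) ≤ 2/(2+c^2) := by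
      have h2e : 1 + c^2/2 ≤ Real.exp (c^2/2) := by
        have := Real.add_one_le_exp (c^2/2); linarith
      have h3e : Real.exp (-c^2/2) = (Real.exp (c^2/2))⁻¹ := by
        rw [← Real.exp_neg]; ring_nf
      rw [h3e]
      have h4e : (Real.exp (c^2/2))⁻¹ ≤ (1 + c^2/2)⁻¹ := by
        apply inv_anti₀ (by positivity) h2e
      have h5e : (1 + c^2/2)⁻¹ = 2/(2+c^2) := by
        rw [inv_eq_one_div]; field_simp
      linarith
    have hmain : 2*(1+c^2) ≤ Real.sqrt (2*Real.pi) * (c*(2+c^2)) := by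
      have h1 : (2.44:ℝ) * 0.7 ≤ Real.sqrt (2*Real.pi) * c :=
        mul_le_mul hsge hc7 (by norm_num) hs0.le
      nlinarith [hcsq, sq_nonneg c]
    have h12r : 1 - 2*r = (1-c^2)/(1+c^2) := by
      rw [hr_eq]; field_simp; ring
    have step1 : (1/c - c) * (Real.exp (-c^2/2) / Real.sqrt (2*Real.pi))
        ≤ (1/c - c) * ((2/(2+c^2)) / Real.sqrt (2*Real.pi)) := by
      apply mul_le_mul_of_nonneg_left _ (by linarith : 0 ≤ 1/c - c)
      exact div_le_div_of_nonneg_right hexp hs0.le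
    have step2 : (1/c - c) * ((2/(2+c^2)) / Real.sqrt (2*Real.pi)) ≤ (1-c^2)/(1+c^2) := by
      have e2 : (1/c - c) * ((2/(2+c^2)) / Real.sqrt (2*Real.pi))
          = (1-c^2) * (2/(c*(2+c^2)*Real.sqrt (2*Real.pi))) := by
        field_simp
      have e3 : (1-c^2)/(1+c^2) = (1-c^2) * (1/(1+c^2)) := by ring
      rw [e2, e3]
      apply mul_le_mul_of_nonneg_left _ (by nlinarith : (0:ℝ) ≤ 1 - c^2)
      rw [div_le_div_iff₀ (by positivity) (by positivity)]
      nlinarith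
    have : Phi (1/c) - Phi c ≤ (1/c - c) * (Real.exp (-c^2/2) / Real.sqrt (2*Real.pi)) := by
      rw [hPhidiff]; exact hinc
    linarith

lemma sup_lemma (p : ℝ) (hp0 : 0 < p) (hp1 : p < 1) (F : ℝ → ℝ)
    (hF0 : ∀ x, x ≤ -Real.sqrt (p/(1-p)) → F x = 0)
    (hFq : ∀ x, -Real.sqrt (p/(1-p)) < x → x ≤ Real.sqrt ((1-p)/p) → F x = 1 - p)
    (hF1 : ∀ x, Real.sqrt ((1-p)/p) < x → F x = 1) :
    (p < 1/2 → (⨆ x : ℝ, |F x - Phi x|) = Phi (Real.sqrt (p/(1-p))) - p) ∧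
    (1/2 ≤ p → (⨆ x : ℝ, |F x - Phi x|) = Phi (Real.sqrt ((1-p)/p)) - (1-p)) := by
  have h1p : 0 < 1 - p := by linarith
  set A := Real.sqrt (p/(1-p)) with hA
  set B := Real.sqrt ((1-p)/p) with hB
  have hA0 : 0 < A := Real.sqrt_pos.2 (by positivity)
  have hB0 : 0 < B := Real.sqrt_pos.2 (by positivity)
  have hnA : Phi (-A) = 1 - Phi A := Phi_neg A
  have hnB : Phi (-B) = 1 - Phi B := Phi_neg B
  constructor
  · intro hp2
    have hcore := core_ineq hp0 hp2.le
    have hcross := cross_ineq hp0 hp2.le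
    rw [← hA] at hcore
    rw [← hA, ← hB] at hcross
    have hAB : A ≤ B := by
      rw [hA, hB]
      apply Real.sqrt_le_sqrt
      rw [div_le_div_iff₀ h1p hp0]; nlinarith
    set M := Phi A - p with hM
    have hub : ∀ x, |F x - Phi x| ≤ M := by
      intro x
      rcases le_or_gt x (-A) with h | h
      · rw [hF0 x h, zero_sub, abs_neg, abs_of_nonneg (Phi_nonneg x)]
        have h1 := Phi_mono h
        linarith
      · rcases le_or_gt x B with h2 | h2
        · rw [hFq x h h2, abs_le]
          constructor
          · have := Phi_mono h2; linarith
          · have := Phi_mono h.le; linarith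
        · rw [hF1 x h2, abs_of_nonneg (by linarith [Phi_le_one x])]
          have h3 : Phi (-B) ≤ Phi (-A) := Phi_mono (by linarith)
          have h4 := Phi_mono h2.le
          linarith
    have hbdd : BddAbove (Set.range fun x => |F x - Phi x|) := by
      refine ⟨M, ?_⟩; rintro y ⟨x, rfl⟩; exact hub x
    apply le_antisymm (ciSup_le hub)
    apply le_of_forall_pos_le_add
    intro ε hε
    obtain ⟨δ, hδ0, hδ⟩ :=
      Metric.continuousAt_iff.1 (Phi_continuous.continuousAt (x := -A)) ε hε
    set x := -A + min (δ/2) (B + A) with hx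
    have hmin0 : 0 < min (δ/2) (B + A) := lt_min (by linarith) (by linarith)
    have hx1 : -A < x := by rw [hx]; linarith
    have hx2 : x ≤ B := by
      have : min (δ/2) (B + A) ≤ B + A := min_le_right _ _
      rw [hx]; linarith
    have hx3 : dist x (-A) < δ := by
      rw [Real.dist_eq, hx]
      rw [show -A + min (δ/2) (B + A) - -A = min (δ/2) (B + A) by ring]
      rw [abs_of_pos hmin0]
      calc min (δ/2) (B + A) ≤ δ/2 := min_le_left _ _
        _ < δ := by linarith
    have h5 : |Phi x - Phi (-A)| < ε := by
      have := hδ hx3; rwa [Real.dist_eq] at this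
    have habs := abs_lt.1 h5
    have h6 : M - ε ≤ |F x - Phi x| := by
      rw [hFq x hx1 hx2]
      have h7 : (1-p) - Phi x ≤ |1 - p - Phi x| := le_abs_self _
      linarith
    have h8 := le_ciSup hbdd x
    linarith
  · intro hp2
    have hq0 : 0 < 1 - p := h1p
    have hq2 : 1 - p ≤ 1/2 := by linarith
    have hcore := core_ineq hq0 hq2
    have hcross := cross_ineq hq0 hq2
    rw [show (1 - (1-p)) = p by ring] at hcore hcross
    rw [← hB] at hcore
    rw [← hA, ← hB] at hcross
    have hBA : B ≤ A := by
      rw [hA, hB]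
      apply Real.sqrt_le_sqrt
      rw [div_le_div_iff₀ hp0 h1p]; nlinarith
    set M := Phi B - (1-p) with hM
    have hub : ∀ x, |F x - Phi x| ≤ M := by
      intro x
      rcases le_or_gt x (-A) with h | h
      · rw [hF0 x h, zero_sub, abs_neg, abs_of_nonneg (Phi_nonneg x)]
        have h1 := Phi_mono h
        have h3 : Phi (-A) ≤ Phi (-B) := Phi_mono (by linarith)
        linarith
      · rcases le_or_gt x B with h2 | h2
        · rw [hFq x h h2, abs_le]
          constructor
          · have := Phi_mono h2; linarith
          · have := Phi_mono h.le; linarith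
        · rw [hF1 x h2, abs_of_nonneg (by linarith [Phi_le_one x])]
          have h4 := Phi_mono h2.le
          linarith
    have hbdd : BddAbove (Set.range fun x => |F x - Phi x|) := by
      refine ⟨M, ?_⟩; rintro y ⟨x, rfl⟩; exact hub x
    apply le_antisymm (ciSup_le hub)
    have hFB : F B = 1 - p := hFq B (by linarith) le_rfl
    have hPhiB : 1/2 ≤ Phi B := by
      have := Phi_mono hB0.le; rw [Phi_zero] at this; linarith
    have heq : |F B - Phi B| = M := by
      rw [hFB, abs_sub_comm, abs_of_nonneg (by linarith)]
    rw [← heq]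
    exact le_ciSup hbdd B

theorem uniform_distance_two_point_normal
    {Ω : Type*} [MeasurableSpace Ω] (μ : Measure Ω) [IsProbabilityMeasure μ]
    (p : ℝ) (hp : p ∈ Set.Ioo (0 : ℝ) 1) (q : ℝ) (hq : q = 1 - p)
    (X : Ω → ℝ) (hX : Measurable X)
    (hXp : μ {ω | X ω = Real.sqrt (q / p)} = ENNReal.ofReal p)
    (hXq : μ {ω | X ω = -Real.sqrt (p / q)} = ENNReal.ofReal q) :
    (p < 1/2 →
      (⨆ x : ℝ, |(μ {ω | X ω < x}).toReal - Phi x|) = Phi (Real.sqrt (p / q)) - p) ∧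
    (1/2 ≤ p →
      (⨆ x : ℝ, |(μ {ω | X ω < x}).toReal - Phi x|) = Phi (Real.sqrt (q / p)) - q) := by
  obtain ⟨hp0, hp1⟩ := hp
  subst hq
  have h1p : (0:ℝ) < 1 - p := by linarith
  set a := -Real.sqrt (p/(1-p)) with ha
  set b := Real.sqrt ((1-p)/p) with hb
  have ha0 : a < 0 := by
    rw [ha, neg_lt, neg_zero]
    exact Real.sqrt_pos.2 (by positivity)
  have hb0 : 0 < b := Real.sqrt_pos.2 (by positivity)
  set S := {ω | X ω = a} with hSdef
  set T := {ω | X ω = b} with hTdef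
  have hS : MeasurableSet S := hX (measurableSet_singleton a)
  have hT : MeasurableSet T := hX (measurableSet_singleton b)
  have hμS : μ S = ENNReal.ofReal (1-p) := hXq
  have hμT : μ T = ENNReal.ofReal p := hXp
  have hd : Disjoint S T := by
    rw [Set.disjoint_left]
    intro ω h1 h2
    rw [hSdef, mem_setOf_eq] at h1
    rw [hTdef, mem_setOf_eq] at h2
    rw [h1] at h2
    linarith
  have hUn : μ (S ∪ T) = 1 := by
    rw [measure_union hd hT, hμS, hμT, ← ENNReal.ofReal_add (by linarith) hp0.le]
    norm_num
  have hcompl : μ (S ∪ T)ᶜ = 0 := by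
    rw [measure_compl (hS.union hT) (measure_ne_top μ _), hUn, measure_univ, tsub_self]
  have hF0 : ∀ x : ℝ, x ≤ a → (μ {ω | X ω < x}).toReal = 0 := by
    intro x hxa
    have hset : {ω | X ω < x} ∩ (S ∪ T) = ∅ := by
      ext ω
      simp only [mem_inter_iff, mem_setOf_eq, mem_union, mem_empty_iff_false, iff_false,
        not_and, hSdef, hTdef]
      rintro h1 (h2 | h2) <;> rw [h2] at h1 <;> linarith
    rw [← measure_inter_conull hcompl, hset, measure_empty, ENNReal.toReal_zero]
  have hFq : ∀ x : ℝ, a < x → x ≤ b → (μ {ω | X ω < x}).toReal = 1 - p := by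
    intro x hxa hxb
    have hset : {ω | X ω < x} ∩ (S ∪ T) = S := by
      ext ω
      simp only [mem_inter_iff, mem_setOf_eq, mem_union, hSdef, hTdef]
      constructor
      · rintro ⟨h1, h2 | h2⟩
        · exact h2
        · rw [h2] at h1; linarith
      · intro h2
        refine ⟨?_, Or.inl h2⟩
        rw [h2]; linarith
    rw [← measure_inter_conull hcompl, hset, hμS, ENNReal.toReal_ofReal (by linarith)]
  have hF1 : ∀ x : ℝ, b < x → (μ {ω | X ω < x}).toReal = 1 := by
    intro x hxb
    have hset : {ω | X ω < x} ∩ (S ∪ T) = S ∪ T := by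
      ext ω
      simp only [mem_inter_iff, mem_setOf_eq, mem_union, hSdef, hTdef]
      constructor
      · rintro ⟨_, h2⟩; exact h2
      · rintro (h2 | h2) <;> refine ⟨?_, by tauto⟩ <;> rw [h2] <;> linarith
    rw [← measure_inter_conull hcompl, hset, hUn, ENNReal.toReal_one]
  exact sup_lemma p hp0 hp1 (fun x => (μ {ω | X ω < x}).toReal) hF0 hFq hF1
end
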